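/- Let G ∈ 𝒢_{0,m2} (no loops) with m2 ≤ M_2²/M². Let f_d(G) denote the number of ordered 6-tuples (v1,v2,v3,v4,v5,v6) of distinct vertices of G such that v2v5 is a double edge, v1v4 and v3v6 are simple edges, and v1v2, v2v3, v4v5 and v5v6 are non-edges (the number of d-switchings applicable to G). Then 2·m2·M²·(1 − (12Δ² − 4Δ + 8)/M) ≤ f_d(G) ≤ 2·m2·M². -/

import Mathlib

open Finset

section Helpers

def tup6 {α : Type*} (a b c d e f : α) : Fin 6 → α := fun i =>
  match i with
  | 0 => a | 1 => b | 2 => c | 3 => d | 4 => e | 5 => f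

lemma inj6 {α : Type*} (a b c d e f : α)
    (h01 : a ≠ b) (h02 : a ≠ c) (h03 : a ≠ d) (h04 : a ≠ e) (h05 : a ≠ f)
    (h12 : b ≠ c) (h13 : b ≠ d) (h14 : b ≠ e) (h15 : b ≠ f)
    (h23 : c ≠ d) (h24 : c ≠ e) (h25 : c ≠ f)
    (h34 : d ≠ e) (h35 : d ≠ f) (h45 : e ≠ f) :
    Function.Injective (tup6 a b c d e f) := by
  intro i j hij
  fin_cases i <;> fin_cases j <;>
    first
      | rfl
      | (exact absurd hij (by assumption))
      | (exact absurd hij.symm (by assumption))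

lemma card_filter_prod_le {α β : Type*} [DecidableEq α] [DecidableEq β]
    (A : Finset α) (B : Finset β)
    (p : α × β → Prop) [DecidablePred p] (k : ℕ)
    (h : ∀ a ∈ A, (B.filter (fun b => p (a, b))).card ≤ k) :
    ((A ×ˢ B).filter p).card ≤ A.card * k := by
  have h1 : ((A ×ˢ B).filter p).card
      = ∑ a ∈ A, (((A ×ˢ B).filter p).filter (fun x => x.1 = a)).card := by
    apply Finset.card_eq_sum_card_fiberwise
    intro x hx
    simp only [Finset.mem_coe, Finset.mem_filter, Finset.mem_product] at hx
    exact hx.1.1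
  rw [h1]
  have step : ∀ a ∈ A, (((A ×ˢ B).filter p).filter (fun x => x.1 = a)).card ≤ k := by
    intro a ha
    refine le_trans (Finset.card_le_card_of_injOn (fun x => x.2)
      (s := ((A ×ˢ B).filter p).filter (fun x => x.1 = a))
      (t := B.filter (fun b => p (a, b))) ?_ ?_) (h a ha)
    · intro x hx
      simp only [Finset.mem_coe, Finset.mem_filter, Finset.mem_product] at hx ⊢
      obtain ⟨⟨⟨_, hB⟩, hp⟩, h1⟩ := hx
      refine ⟨hB, ?_⟩
      rwa [← h1, Prod.mk.eta]
    · intro x hx y hy hxy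
      have hx2 := (Finset.mem_filter.mp hx).2
      have hy2 := (Finset.mem_filter.mp hy).2
      exact Prod.ext (hx2.trans hy2.symm) hxy
  calc ∑ a ∈ A, (((A ×ˢ B).filter p).filter (fun x => x.1 = a)).card
      ≤ ∑ _a ∈ A, k := Finset.sum_le_sum step
    _ = A.card * k := by rw [Finset.sum_const, smul_eq_mul]

lemma card_filter_or_le {α : Type*} (s : Finset α) (p q : α → Prop)
    [DecidablePred p] [DecidablePred q] :
    (s.filter (fun x => p x ∨ q x)).card ≤ (s.filter p).card + (s.filter q).card := by
  classical
  rw [Finset.filter_or]; exact Finset.card_union_le _ _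

end Helpers

set_option maxHeartbeats 1000000 in
theorem fd_bounds (n : ℕ) (d : Fin n → ℕ) (mG : Fin n → Fin n → ℕ)
    (M M2 Δ m2 : ℕ)
    (hM : M = ∑ i, d i)
    (hM2 : M2 = ∑ i, d i * (d i - 1))
    (hΔ : Δ = Finset.univ.sup d)
    (hsymm : ∀ u v, mG u v = mG v u)
    (hdeg : ∀ v, (∑ u ∈ Finset.univ.filter (fun u => u ≠ v), mG v u)
        + 2 * mG v v = d v)
    (hloop : ∀ v, mG v v = 0)
    (hmul : ∀ u v, u ≠ v → mG u v ≤ 2)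
    (hm2 : 2 * m2 = Set.ncard {q : Fin n × Fin n | q.1 ≠ q.2 ∧ mG q.1 q.2 = 2})
    (hm2le : (m2 : ℝ) ≤ (M2 : ℝ) ^ 2 / (M : ℝ) ^ 2)
    (fd : ℕ)
    (hfd : fd = Set.ncard {t : Fin 6 → Fin n | Function.Injective t ∧
      mG (t 1) (t 4) = 2 ∧
      mG (t 0) (t 3) = 1 ∧ mG (t 2) (t 5) = 1 ∧
      mG (t 0) (t 1) = 0 ∧ mG (t 1) (t 2) = 0 ∧
      mG (t 3) (t 4) = 0 ∧ mG (t 4) (t 5) = 0}) :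
    2 * (m2 : ℝ) * M ^ 2 * (1 - (12 * Δ ^ 2 - 4 * Δ + 8) / M) ≤ (fd : ℝ)
      ∧ fd ≤ 2 * m2 * M ^ 2 := by
  classical
  -- the finsets of simple and double (ordered) edges
  set Sst : Finset (Fin n × Fin n) := univ.filter (fun q => mG q.1 q.2 = 1) with hSst
  set Dst : Finset (Fin n × Fin n) := univ.filter (fun q => mG q.1 q.2 = 2) with hDst
  clear_value Sst Dst
  set GoodP : (Fin 6 → Fin n) → Prop := fun t => Function.Injective t ∧
      mG (t 1) (t 4) = 2 ∧
      mG (t 0) (t 3) = 1 ∧ mG (t 2) (t 5) = 1 ∧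
      mG (t 0) (t 1) = 0 ∧ mG (t 1) (t 2) = 0 ∧
      mG (t 3) (t 4) = 0 ∧ mG (t 4) (t 5) = 0 with hGoodP
  set T : Finset (Fin 6 → Fin n) := univ.filter GoodP with hT
  have hfd' : fd = T.card := by
    rw [hfd, ← Set.ncard_coe_finset]
    congr 1
    ext t
    simp [hT, hGoodP]
  clear hfd
  have hneS : ∀ q : Fin n × Fin n, mG q.1 q.2 = 1 → q.1 ≠ q.2 := by
    intro q h he
    rw [he, hloop] at h; omega
  have hneD : ∀ q : Fin n × Fin n, mG q.1 q.2 = 2 → q.1 ≠ q.2 := by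
    intro q h he
    rw [he, hloop] at h; omega
  have hDc : Dst.card = 2 * m2 := by
    rw [hm2, ← Set.ncard_coe_finset]
    congr 1
    ext q
    simp only [hDst, Finset.coe_filter, Finset.mem_univ, true_and, Set.mem_setOf_eq]
    exact ⟨fun h => ⟨hneD q h, h⟩, fun h => h.2⟩
  -- basic degree facts
  have hdeg' : ∀ v, (∑ u, mG v u) = d v := by
    intro v
    have h := hdeg v
    rw [hloop v, mul_zero, add_zero] at h
    rw [← h, ← Finset.sum_filter_add_sum_filter_not univ (fun u => u ≠ v) (fun u => mG v u)]
    have h0 : ∑ u ∈ univ.filter (fun u => ¬ u ≠ v), mG v u = 0 := by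
      apply Finset.sum_eq_zero
      intro u hu
      simp only [Finset.mem_filter, Finset.mem_univ, not_not, true_and] at hu
      rw [hu]; exact hloop v
    rw [h0, add_zero]
  have hdΔ : ∀ v, d v ≤ Δ := by
    intro v; rw [hΔ]; exact Finset.le_sup (Finset.mem_univ v)
  have hnb : ∀ v, (univ.filter (fun u => mG v u ≠ 0)).card ≤ d v := by
    intro v
    rw [← hdeg' v]
    calc (univ.filter (fun u => mG v u ≠ 0)).card
        = ∑ _u ∈ univ.filter (fun u => mG v u ≠ 0), 1 := by
          rw [Finset.sum_const, smul_eq_mul, mul_one]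
      _ ≤ ∑ u ∈ univ.filter (fun u => mG v u ≠ 0), mG v u := by
          refine Finset.sum_le_sum (fun u hu => ?_)
          simp only [Finset.mem_filter] at hu
          omega
      _ ≤ ∑ u, mG v u := Finset.sum_le_sum_of_subset (Finset.filter_subset _ _)
  -- fiber bounds
  have hSA : ∀ v, (Sst.filter (fun q => q.1 = v)).card ≤ Δ := by
    intro v
    refine le_trans (le_trans (Finset.card_le_card_of_injOn (fun q => q.2)
      (t := univ.filter (fun u => mG v u ≠ 0)) ?_ ?_) (hnb v)) (hdΔ v)
    · intro q hq
      simp only [hSst, Finset.mem_coe, Finset.mem_filter, Finset.mem_univ, true_and] at hq ⊢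
      rw [← hq.2]; omega
    · intro q hq q' hq' h
      simp only [hSst, Finset.mem_coe, Finset.mem_filter, Finset.mem_univ, true_and] at hq hq'
      exact Prod.ext (hq.2.trans hq'.2.symm) h
  have hSA' : ∀ v, (Sst.filter (fun q => q.2 = v)).card ≤ Δ := by
    intro v
    refine le_trans (le_trans (Finset.card_le_card_of_injOn (fun q => q.1)
      (t := univ.filter (fun u => mG v u ≠ 0)) ?_ ?_) (hnb v)) (hdΔ v)
    · intro q hq
      simp only [hSst, Finset.mem_coe, Finset.mem_filter, Finset.mem_univ, true_and] at hq ⊢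
      rw [hsymm]
      rw [← hq.2]; omega
    · intro q hq q' hq' h
      simp only [hSst, Finset.mem_coe, Finset.mem_filter, Finset.mem_univ, true_and] at hq hq'
      exact Prod.ext h (hq.2.trans hq'.2.symm)
  have hB1 : ∀ v, (Sst.filter (fun q => mG q.1 v ≠ 0)).card ≤ Δ * Δ := by
    intro v
    have hsub : Sst.filter (fun q => mG q.1 v ≠ 0)
        ⊆ (univ.filter (fun u => mG v u ≠ 0)).biUnion
            (fun w => Sst.filter (fun q => q.1 = w)) := by
      intro q hq
      simp only [hSst, Finset.mem_biUnion, Finset.mem_filter, Finset.mem_univ, true_and] at hq ⊢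
      exact ⟨q.1, by rw [hsymm]; exact hq.2, hq.1, rfl⟩
    refine le_trans (Finset.card_le_card hsub) (le_trans Finset.card_biUnion_le ?_)
    refine le_trans (Finset.sum_le_sum (fun w _ => hSA w)) ?_
    rw [Finset.sum_const, smul_eq_mul]
    exact Nat.mul_le_mul (le_trans (hnb v) (hdΔ v)) le_rfl
  have hB2 : ∀ v, (Sst.filter (fun q => mG q.2 v ≠ 0)).card ≤ Δ * Δ := by
    intro v
    have hsub : Sst.filter (fun q => mG q.2 v ≠ 0)
        ⊆ (univ.filter (fun u => mG v u ≠ 0)).biUnion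
            (fun w => Sst.filter (fun q => q.2 = w)) := by
      intro q hq
      simp only [hSst, Finset.mem_biUnion, Finset.mem_filter, Finset.mem_univ, true_and] at hq ⊢
      exact ⟨q.2, by rw [hsymm]; exact hq.2, hq.1, rfl⟩
    refine le_trans (Finset.card_le_card hsub) (le_trans Finset.card_biUnion_le ?_)
    refine le_trans (Finset.sum_le_sum (fun w _ => hSA' w)) ?_
    rw [Finset.sum_const, smul_eq_mul]
    exact Nat.mul_le_mul (le_trans (hnb v) (hdΔ v)) le_rfl
  -- M = |S| + 2 |D|
  have hM' : M = Sst.card + 2 * Dst.card := by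
    have hpt : ∀ p : Fin n × Fin n, mG p.1 p.2
        = (if mG p.1 p.2 = 1 then 1 else 0) + 2 * (if mG p.1 p.2 = 2 then 1 else 0) := by
      intro p
      rcases eq_or_ne p.1 p.2 with h | h
      · have h0 : mG p.1 p.2 = 0 := by rw [h]; exact hloop _
        simp [h0]
      · have := hmul _ _ h
        split_ifs <;> omega
    have hMs : M = ∑ p ∈ (univ : Finset (Fin n × Fin n)), mG p.1 p.2 := by
      rw [hM, ← Finset.univ_product_univ, Finset.sum_product]
      exact Finset.sum_congr rfl (fun v _ => (hdeg' v).symm)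
    rw [hMs, Finset.sum_congr rfl (fun p _ => hpt p), Finset.sum_add_distrib,
      ← Finset.mul_sum]
    congr 1
    · rw [hSst]; exact (Finset.card_filter _ _).symm
    · congr 1; rw [hDst]; exact (Finset.card_filter _ _).symm
  -- the product and the packing/unpacking maps
  set P : Finset ((Fin n × Fin n) × ((Fin n × Fin n) × (Fin n × Fin n))) :=
    Dst ×ˢ (Sst ×ˢ Sst) with hP
  set Φ : ((Fin n × Fin n) × ((Fin n × Fin n) × (Fin n × Fin n))) → (Fin 6 → Fin n) :=
    fun x => tup6 x.2.1.1 x.1.1 x.2.2.1 x.2.1.2 x.1.2 x.2.2.2 with hΦ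
  have hTP : T.card = (P.filter (fun x => GoodP (Φ x))).card := by
    apply Finset.card_nbij' (i := fun t => ((t 1, t 4), ((t 0, t 3), (t 2, t 5))))
      (j := Φ)
    · intro t ht
      simp only [hT, Finset.mem_coe, Finset.mem_filter, Finset.mem_univ, true_and] at ht
      have hΦt : Φ ((t 1, t 4), ((t 0, t 3), (t 2, t 5))) = t := by
        funext i; fin_cases i <;> rfl
      simp only [Finset.mem_coe, Finset.mem_filter, hP, Finset.mem_product, hΦt]
      obtain ⟨hinj, h14, h03, h25, _⟩ := id ht
      refine ⟨⟨?_, ?_, ?_⟩, ht⟩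
      · simp only [hDst, Finset.mem_filter, Finset.mem_univ, true_and]; exact h14
      · simp only [hSst, Finset.mem_filter, Finset.mem_univ, true_and]; exact h03
      · simp only [hSst, Finset.mem_filter, Finset.mem_univ, true_and]; exact h25
    · intro x hx
      simp only [Finset.mem_coe, Finset.mem_filter] at hx
      simp only [hT, Finset.mem_coe, Finset.mem_filter, Finset.mem_univ, true_and]
      exact hx.2
    · intro t ht
      funext i; fin_cases i <;> rfl
    · intro x hx
      rfl
  have hPcard : P.card = Dst.card * (Sst.card * Sst.card) := by
    rw [hP, Finset.card_product, Finset.card_product]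
  have hsplit : (P.filter (fun x => GoodP (Φ x))).card
      + (P.filter (fun x => ¬ GoodP (Φ x))).card = P.card :=
    Finset.card_filter_add_card_filter_not _
  set bad : ℕ := (P.filter (fun x => ¬ GoodP (Φ x))).card with hbaddef
  have hkey : fd + bad = 2 * m2 * (Sst.card * Sst.card) := by
    rw [hfd', hTP, hbaddef, hsplit, hPcard, hDc]
  have hScM : Sst.card + 4 * m2 = M := by omega
  -- upper bound
  have hupper : fd ≤ 2 * m2 * M ^ 2 := by
    have h1 : fd ≤ 2 * m2 * (Sst.card * Sst.card) := by omega
    calc fd ≤ 2 * m2 * (Sst.card * Sst.card) := h1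
      _ ≤ 2 * m2 * (M * M) :=
          Nat.mul_le_mul_left _ (Nat.mul_le_mul (by omega) (by omega))
      _ = 2 * m2 * M ^ 2 := by ring
  -- inner fiber bounds for the three "bad" conditions
  have hqb : ∀ a : Fin n × Fin n, (Sst.filter (fun q => q.1 = a.1 ∨ q.1 = a.2 ∨
      q.2 = a.1 ∨ q.2 = a.2 ∨ mG q.1 a.1 ≠ 0 ∨ mG q.2 a.2 ≠ 0)).card
      ≤ 4 * Δ + 2 * (Δ * Δ) := by
    intro a
    have h1 := card_filter_or_le Sst (fun q => q.1 = a.1)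
      (fun q => q.1 = a.2 ∨ q.2 = a.1 ∨ q.2 = a.2 ∨ mG q.1 a.1 ≠ 0 ∨ mG q.2 a.2 ≠ 0)
    have h2 := card_filter_or_le Sst (fun q => q.1 = a.2)
      (fun q => q.2 = a.1 ∨ q.2 = a.2 ∨ mG q.1 a.1 ≠ 0 ∨ mG q.2 a.2 ≠ 0)
    have h3 := card_filter_or_le Sst (fun q => q.2 = a.1)
      (fun q => q.2 = a.2 ∨ mG q.1 a.1 ≠ 0 ∨ mG q.2 a.2 ≠ 0)
    have h4 := card_filter_or_le Sst (fun q => q.2 = a.2)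
      (fun q => mG q.1 a.1 ≠ 0 ∨ mG q.2 a.2 ≠ 0)
    have h5 := card_filter_or_le Sst (fun q => mG q.1 a.1 ≠ 0) (fun q => mG q.2 a.2 ≠ 0)
    have b1 := hSA a.1
    have b2 := hSA a.2
    have b3 := hSA' a.1
    have b4 := hSA' a.2
    have b5 := hB1 a.1
    have b6 := hB2 a.2
    linarith
  have hsymm_filt1 : ∀ a : Fin n, Sst.filter (fun r => mG a r.1 ≠ 0)
      = Sst.filter (fun r => mG r.1 a ≠ 0) :=
    fun a => Finset.filter_congr (fun q _ => by rw [hsymm])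
  have hsymm_filt2 : ∀ a : Fin n, Sst.filter (fun r => mG a r.2 ≠ 0)
      = Sst.filter (fun r => mG r.2 a ≠ 0) :=
    fun a => Finset.filter_congr (fun q _ => by rw [hsymm])
  have hrb : ∀ a : Fin n × Fin n, (Sst.filter (fun r => r.1 = a.1 ∨ r.1 = a.2 ∨
      r.2 = a.1 ∨ r.2 = a.2 ∨ mG a.1 r.1 ≠ 0 ∨ mG a.2 r.2 ≠ 0)).card
      ≤ 4 * Δ + 2 * (Δ * Δ) := by
    intro a
    have h1 := card_filter_or_le Sst (fun r => r.1 = a.1)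
      (fun r => r.1 = a.2 ∨ r.2 = a.1 ∨ r.2 = a.2 ∨ mG a.1 r.1 ≠ 0 ∨ mG a.2 r.2 ≠ 0)
    have h2 := card_filter_or_le Sst (fun r => r.1 = a.2)
      (fun r => r.2 = a.1 ∨ r.2 = a.2 ∨ mG a.1 r.1 ≠ 0 ∨ mG a.2 r.2 ≠ 0)
    have h3 := card_filter_or_le Sst (fun r => r.2 = a.1)
      (fun r => r.2 = a.2 ∨ mG a.1 r.1 ≠ 0 ∨ mG a.2 r.2 ≠ 0)
    have h4 := card_filter_or_le Sst (fun r => r.2 = a.2)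
      (fun r => mG a.1 r.1 ≠ 0 ∨ mG a.2 r.2 ≠ 0)
    have h5 := card_filter_or_le Sst (fun r => mG a.1 r.1 ≠ 0) (fun r => mG a.2 r.2 ≠ 0)
    have b1 := hSA a.1
    have b2 := hSA a.2
    have b3 := hSA' a.1
    have b4 := hSA' a.2
    have b5 : (Sst.filter (fun r => mG a.1 r.1 ≠ 0)).card ≤ Δ * Δ := by
      rw [hsymm_filt1 a.1]; exact hB1 a.1
    have b6 : (Sst.filter (fun r => mG a.2 r.2 ≠ 0)).card ≤ Δ * Δ := by
      rw [hsymm_filt2 a.2]; exact hB2 a.2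
    linarith
  have hq3 : ∀ a : Fin n × Fin n, (Sst.filter (fun r => r.1 = a.1 ∨ r.1 = a.2 ∨
      r.2 = a.1 ∨ r.2 = a.2)).card ≤ 4 * Δ := by
    intro a
    have h1 := card_filter_or_le Sst (fun r => r.1 = a.1)
      (fun r => r.1 = a.2 ∨ r.2 = a.1 ∨ r.2 = a.2)
    have h2 := card_filter_or_le Sst (fun r => r.1 = a.2)
      (fun r => r.2 = a.1 ∨ r.2 = a.2)
    have h3 := card_filter_or_le Sst (fun r => r.2 = a.1) (fun r => r.2 = a.2)
    have b1 := hSA a.1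
    have b2 := hSA a.2
    have b3 := hSA' a.1
    have b4 := hSA' a.2
    linarith
  -- bounds on the three bad sets
  have hG1 : (P.filter (fun x => x.2.1.1 = x.1.1 ∨ x.2.1.1 = x.1.2 ∨ x.2.1.2 = x.1.1 ∨
      x.2.1.2 = x.1.2 ∨ mG x.2.1.1 x.1.1 ≠ 0 ∨ mG x.2.1.2 x.1.2 ≠ 0)).card
      ≤ Dst.card * ((4 * Δ + 2 * (Δ * Δ)) * Sst.card) := by
    rw [hP]
    refine card_filter_prod_le _ _ _ _ (fun a _ => ?_)
    show ((Sst ×ˢ Sst).filter (fun b => b.1.1 = a.1 ∨ b.1.1 = a.2 ∨ b.1.2 = a.1 ∨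
      b.1.2 = a.2 ∨ mG b.1.1 a.1 ≠ 0 ∨ mG b.1.2 a.2 ≠ 0)).card
      ≤ (4 * Δ + 2 * (Δ * Δ)) * Sst.card
    have heq : ((Sst ×ˢ Sst).filter (fun b => b.1.1 = a.1 ∨ b.1.1 = a.2 ∨ b.1.2 = a.1 ∨
        b.1.2 = a.2 ∨ mG b.1.1 a.1 ≠ 0 ∨ mG b.1.2 a.2 ≠ 0))
        = (Sst.filter (fun q => q.1 = a.1 ∨ q.1 = a.2 ∨ q.2 = a.1 ∨ q.2 = a.2 ∨
            mG q.1 a.1 ≠ 0 ∨ mG q.2 a.2 ≠ 0)) ×ˢ Sst := by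
      ext ⟨q, r⟩
      simp only [Finset.mem_filter, Finset.mem_product]
      exact ⟨fun ⟨⟨a1, b1⟩, c1⟩ => ⟨⟨a1, c1⟩, b1⟩, fun ⟨⟨a1, c1⟩, b1⟩ => ⟨⟨a1, b1⟩, c1⟩⟩
    rw [heq, Finset.card_product]
    exact Nat.mul_le_mul (hqb a) le_rfl
  have hG2 : (P.filter (fun x => x.2.2.1 = x.1.1 ∨ x.2.2.1 = x.1.2 ∨ x.2.2.2 = x.1.1 ∨
      x.2.2.2 = x.1.2 ∨ mG x.1.1 x.2.2.1 ≠ 0 ∨ mG x.1.2 x.2.2.2 ≠ 0)).card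
      ≤ Dst.card * (Sst.card * (4 * Δ + 2 * (Δ * Δ))) := by
    rw [hP]
    refine card_filter_prod_le _ _ _ _ (fun a _ => ?_)
    show ((Sst ×ˢ Sst).filter (fun b => b.2.1 = a.1 ∨ b.2.1 = a.2 ∨ b.2.2 = a.1 ∨
      b.2.2 = a.2 ∨ mG a.1 b.2.1 ≠ 0 ∨ mG a.2 b.2.2 ≠ 0)).card
      ≤ Sst.card * (4 * Δ + 2 * (Δ * Δ))
    have heq : ((Sst ×ˢ Sst).filter (fun b => b.2.1 = a.1 ∨ b.2.1 = a.2 ∨ b.2.2 = a.1 ∨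
        b.2.2 = a.2 ∨ mG a.1 b.2.1 ≠ 0 ∨ mG a.2 b.2.2 ≠ 0))
        = Sst ×ˢ (Sst.filter (fun r => r.1 = a.1 ∨ r.1 = a.2 ∨ r.2 = a.1 ∨ r.2 = a.2 ∨
            mG a.1 r.1 ≠ 0 ∨ mG a.2 r.2 ≠ 0)) := by
      ext ⟨q, r⟩
      simp only [Finset.mem_filter, Finset.mem_product]
      exact ⟨fun ⟨⟨a1, b1⟩, c1⟩ => ⟨a1, b1, c1⟩, fun ⟨a1, b1, c1⟩ => ⟨⟨a1, b1⟩, c1⟩⟩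
    rw [heq, Finset.card_product]
    exact Nat.mul_le_mul le_rfl (hrb a)
  have hG3 : (P.filter (fun x => x.2.2.1 = x.2.1.1 ∨ x.2.2.1 = x.2.1.2 ∨
      x.2.2.2 = x.2.1.1 ∨ x.2.2.2 = x.2.1.2)).card
      ≤ Dst.card * (Sst.card * (4 * Δ)) := by
    rw [hP]
    refine card_filter_prod_le _ _ _ _ (fun a _ => ?_)
    show ((Sst ×ˢ Sst).filter (fun b => b.2.1 = b.1.1 ∨ b.2.1 = b.1.2 ∨
      b.2.2 = b.1.1 ∨ b.2.2 = b.1.2)).card ≤ Sst.card * (4 * Δ)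
    refine card_filter_prod_le _ _ _ _ (fun q _ => ?_)
    exact hq3 q
  -- every bad tuple satisfies one of the three conditions
  have hbadsub : P.filter (fun x => ¬ GoodP (Φ x)) ⊆ P.filter (fun x =>
      (x.2.1.1 = x.1.1 ∨ x.2.1.1 = x.1.2 ∨ x.2.1.2 = x.1.1 ∨
        x.2.1.2 = x.1.2 ∨ mG x.2.1.1 x.1.1 ≠ 0 ∨ mG x.2.1.2 x.1.2 ≠ 0) ∨
      (x.2.2.1 = x.1.1 ∨ x.2.2.1 = x.1.2 ∨ x.2.2.2 = x.1.1 ∨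
        x.2.2.2 = x.1.2 ∨ mG x.1.1 x.2.2.1 ≠ 0 ∨ mG x.1.2 x.2.2.2 ≠ 0) ∨
      (x.2.2.1 = x.2.1.1 ∨ x.2.2.1 = x.2.1.2 ∨
        x.2.2.2 = x.2.1.1 ∨ x.2.2.2 = x.2.1.2)) := by
    intro x hx
    simp only [Finset.mem_filter] at hx ⊢
    refine ⟨hx.1, ?_⟩
    by_contra hcon
    push_neg at hcon
    obtain ⟨⟨h1, h2, h3, h4, h5, h6⟩, ⟨h7, h8, h9, h10, h11, h12⟩, h13, h14, h15, h16⟩ := hcon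
    apply hx.2
    have hxP := hx.1
    simp only [hP, Finset.mem_product, hDst, hSst, Finset.mem_filter, Finset.mem_univ,
      true_and] at hxP
    obtain ⟨hD2, hS1, hS2⟩ := hxP
    show Function.Injective (Φ x) ∧ mG (Φ x 1) (Φ x 4) = 2 ∧
      mG (Φ x 0) (Φ x 3) = 1 ∧ mG (Φ x 2) (Φ x 5) = 1 ∧
      mG (Φ x 0) (Φ x 1) = 0 ∧ mG (Φ x 1) (Φ x 2) = 0 ∧
      mG (Φ x 3) (Φ x 4) = 0 ∧ mG (Φ x 4) (Φ x 5) = 0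
    refine ⟨?_, hD2, hS1, hS2, h5, h11, h6, h12⟩
    exact inj6 _ _ _ _ _ _ h1 (Ne.symm h13) (hneS _ hS1) h2 (Ne.symm h15)
      (Ne.symm h7) (Ne.symm h3) (hneD _ hD2) (Ne.symm h9)
      h14 h8 (hneS _ hS2) h4 (Ne.symm h16) (Ne.symm h10)
  -- total bad bound
  have hbadle : bad ≤ 2 * m2 * (Sst.card * (12 * Δ + 4 * (Δ * Δ))) := by
    have step : bad ≤ Dst.card * ((4 * Δ + 2 * (Δ * Δ)) * Sst.card)
        + (Dst.card * (Sst.card * (4 * Δ + 2 * (Δ * Δ)))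
          + Dst.card * (Sst.card * (4 * Δ))) := by
      rw [hbaddef]
      refine le_trans (Finset.card_le_card hbadsub) ?_
      refine le_trans (card_filter_or_le _ _ _) ?_
      exact add_le_add hG1 (le_trans (card_filter_or_le _ _ _) (add_le_add hG2 hG3))
    refine le_trans step (le_of_eq ?_)
    rw [hDc]
    ring
  -- endgame
  refine ⟨?_, hupper⟩
  rcases Nat.eq_zero_or_pos m2 with h0 | hm2pos
  · rw [h0]
    simp only [Nat.cast_zero, mul_zero, zero_mul]
    positivity
  · have hDne : Dst.Nonempty := Finset.card_pos.mp (by omega)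
    obtain ⟨p0, hp0⟩ := hDne
    have hp02 : mG p0.1 p0.2 = 2 := by
      simpa [hDst] using hp0
    have hd2 : 2 ≤ d p0.1 := by
      rw [← hdeg' p0.1]
      calc 2 = mG p0.1 p0.2 := hp02.symm
        _ ≤ ∑ u, mG p0.1 u :=
            Finset.single_le_sum (fun _ _ => Nat.zero_le _) (Finset.mem_univ p0.2)
    have hΔ2 : 2 ≤ Δ := le_trans hd2 (hdΔ p0.1)
    have hM2le : 2 ≤ M := by
      rw [hM]
      exact le_trans hd2 (Finset.single_le_sum (fun _ _ => Nat.zero_le _)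
        (Finset.mem_univ p0.1))
    have hMpos : (0:ℝ) < M := by
      have : (2:ℝ) ≤ M := by exact_mod_cast hM2le
      linarith
    have hM2Δ : M2 ≤ (Δ - 1) * M := by
      rw [hM2, hM, Finset.mul_sum]
      refine Finset.sum_le_sum (fun i _ => ?_)
      have hi := hdΔ i
      have h1 : d i - 1 ≤ Δ - 1 := by omega
      calc d i * (d i - 1) ≤ d i * (Δ - 1) := Nat.mul_le_mul_left _ h1
        _ = (Δ - 1) * d i := Nat.mul_comm _ _
    have hM2R : (M2:ℝ) ≤ ((Δ:ℝ) - 1) * M := by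
      have h1 : (1:ℕ) ≤ Δ := by omega
      have h2 := (Nat.cast_le (α := ℝ)).mpr hM2Δ
      rwa [Nat.cast_mul, Nat.cast_sub h1, Nat.cast_one] at h2
    have hm2R : (m2:ℝ) ≤ ((Δ:ℝ) - 1) ^ 2 := by
      refine le_trans hm2le ?_
      rw [div_le_iff₀ (by positivity)]
      have hM2nn : (0:ℝ) ≤ (M2:ℝ) := Nat.cast_nonneg _
      nlinarith [hM2R, hM2nn, hMpos]
    have hkeyR : (fd:ℝ) + bad = 2 * m2 * ((Sst.card : ℝ) * Sst.card) := by
      exact_mod_cast congrArg (Nat.cast (R := ℝ)) hkey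
    have hbadR : (bad:ℝ) ≤ 2 * m2 * ((Sst.card : ℝ) * (12 * Δ + 4 * (Δ * Δ))) := by
      exact_mod_cast hbadle
    have hMSR : (M:ℝ) = (Sst.card : ℝ) + 4 * m2 := by
      exact_mod_cast (congrArg (Nat.cast (R := ℝ)) hScM).symm
    have hScnn : (0:ℝ) ≤ (Sst.card : ℝ) := Nat.cast_nonneg _
    have hm2R1 : (1:ℝ) ≤ m2 := by exact_mod_cast hm2pos
    have hΔR : (2:ℝ) ≤ Δ := by exact_mod_cast hΔ2
    have hrw : 2 * (m2:ℝ) * M ^ 2 * (1 - (12 * Δ ^ 2 - 4 * Δ + 8) / M)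
        = 2 * m2 * (M:ℝ) ^ 2 - 2 * m2 * M * (12 * Δ ^ 2 - 4 * Δ + 8) := by
      field_simp
    rw [hrw, hMSR]
    have a1 : (0:ℝ) ≤ m2 * (Sst.card : ℝ) * (((Δ:ℝ) - 1) ^ 2 - m2) := by
      apply mul_nonneg (mul_nonneg (by linarith) hScnn)
      linarith
    have a2 : (0:ℝ) ≤ m2 * m2 * (12 * (Δ:ℝ) ^ 2 - 4 * Δ + 8 - 4 * m2) := by
      apply mul_nonneg (mul_nonneg (by linarith) (by linarith))
      nlinarith [hm2R, hΔR]
    nlinarith [a1, a2, hkeyR, hbadR, hScnn, hm2R1, hΔR]
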